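/- Let (X_i)_{i≥1} be a martingale difference sequence with respect to a filtration (F_i)_{i≥0} (i.e., X_i is F_i-measurable and E[X_i | F_{i−1}] = 0), with |X_i| ≤ B almost surely for all i, and let δ ∈ (0,1). Then with probability at least 1 − δ, simultaneously for all integers l ≥ 1 and n ≥ 1, |Σ_{i=l}^{l+n−1} X_i| ≤ B·√( 2·n·ln( 4·(l+n−1)³ / δ ) ). -/

import Mathlib

open MeasureTheory Real

namespace AzumaAux

lemma exp_le_line {B t x : ℝ} (hB : 0 < B) (hx : |x| ≤ B) :
    Real.exp (t * x) ≤ Real.cosh (t * B) + (Real.sinh (t * B) / B) * x := by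
  have hx1 : -B ≤ x := neg_le_of_abs_le hx
  have hx2 : x ≤ B := le_of_abs_le hx
  have ha : (0:ℝ) ≤ (B - x) / (2 * B) := by
    apply div_nonneg (by linarith) (by linarith)
  have hb : (0:ℝ) ≤ (B + x) / (2 * B) := by
    apply div_nonneg (by linarith) (by linarith)
  have hab : (B - x) / (2 * B) + (B + x) / (2 * B) = 1 := by
    field_simp; ring
  have hconv := convexOn_exp.2 (Set.mem_univ (t * (-B))) (Set.mem_univ (t * B)) ha hb hab
  have hcomb : ((B - x) / (2 * B)) • (t * (-B)) + ((B + x) / (2 * B)) • (t * B) = t * x := by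
    simp only [smul_eq_mul]
    field_simp
    ring
  rw [hcomb] at hconv
  refine hconv.trans_eq ?_
  have hinv : Real.exp (t * -B) = (Real.exp (t * B))⁻¹ := by
    rw [← Real.exp_neg]; ring_nf
  rw [hinv, Real.cosh_eq, Real.sinh_eq, Real.exp_neg]
  have hB' : B ≠ 0 := hB.ne'
  have he : Real.exp (t * B) ≠ 0 := (Real.exp_pos _).ne'
  simp only [smul_eq_mul]
  field_simp
  ring


variable {Ω : Type*} {m0 : MeasurableSpace Ω} {μ : Measure Ω} [IsProbabilityMeasure μ]

lemma integrable_exp_of_bdd {X : Ω → ℝ} (hX : AEMeasurable X μ)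
    {B : ℝ} (hbdd : ∀ᵐ ω ∂μ, |X ω| ≤ B) (t : ℝ) :
    Integrable (fun ω => Real.exp (t * X ω)) μ := by
  refine Integrable.mono' (integrable_const (Real.exp (|t| * B)))
    ((Real.measurable_exp.comp_aemeasurable (hX.const_mul t)).aestronglyMeasurable) ?_
  filter_upwards [hbdd] with ω h
  rw [Real.norm_eq_abs, abs_of_pos (Real.exp_pos _)]
  apply Real.exp_le_exp.2
  calc t * X ω ≤ |t * X ω| := le_abs_self _
    _ = |t| * |X ω| := abs_mul _ _
    _ ≤ |t| * B := by
        apply mul_le_mul_of_nonneg_left h (abs_nonneg t)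

lemma condexp_exp_le {m' : MeasurableSpace Ω} (hm : m' ≤ m0)
    {X : Ω → ℝ} (hX : Integrable X μ) (hmean : μ[X|m'] =ᵐ[μ] 0)
    {B : ℝ} (hB : 0 < B) (hbdd : ∀ᵐ ω ∂μ, |X ω| ≤ B) (t : ℝ) :
    μ[fun ω => Real.exp (t * X ω)|m'] ≤ᵐ[μ] fun _ => Real.exp (t ^ 2 * B ^ 2 / 2) := by
  set c : ℝ := Real.sinh (t * B) / B with hc
  have hexp_int : Integrable (fun ω => Real.exp (t * X ω)) μ :=
    integrable_exp_of_bdd hX.aemeasurable hbdd t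
  have hg_int : Integrable ((fun _ => Real.cosh (t * B)) + c • X) μ :=
    (integrable_const _).add (hX.smul c)
  have step1 : μ[fun ω => Real.exp (t * X ω)|m'] ≤ᵐ[μ]
      μ[(fun _ => Real.cosh (t * B)) + c • X|m'] := by
    refine condExp_mono hexp_int hg_int ?_
    filter_upwards [hbdd] with ω h
    have := exp_le_line (t := t) hB h
    simp only [Pi.add_apply, Pi.smul_apply, smul_eq_mul, hc]
    linarith
  have step2 : μ[(fun _ => Real.cosh (t * B)) + c • X|m'] =ᵐ[μ]
      fun _ => Real.cosh (t * B) := by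
    calc μ[(fun _ => Real.cosh (t * B)) + c • X|m']
        =ᵐ[μ] μ[(fun _ => Real.cosh (t * B))|m'] + μ[c • X|m'] :=
          condExp_add (integrable_const _) (hX.smul c) m'
      _ =ᵐ[μ] (fun _ => Real.cosh (t * B)) + c • μ[X|m'] := by
          rw [condExp_const hm]
          exact Filter.EventuallyEq.add Filter.EventuallyEq.rfl (condExp_smul c X m')
      _ =ᵐ[μ] fun _ => Real.cosh (t * B) := by
          filter_upwards [hmean] with ω h
          simp [h]
  have step3 : Real.cosh (t * B) ≤ Real.exp (t ^ 2 * B ^ 2 / 2) := by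
    have := Real.cosh_le_exp_half_sq (t * B)
    rwa [mul_pow] at this
  filter_upwards [step1, step2] with ω h1 h2
  exact (h1.trans_eq h2).trans step3

lemma mgf_sum_le (ℱ : Filtration ℕ m0) (X : ℕ → Ω → ℝ)
    (hadapted : ∀ i, StronglyMeasurable[ℱ i] (X i))
    (hint : ∀ i, Integrable (X i) μ)
    (hmds : ∀ i, 1 ≤ i → μ[X i | ℱ (i - 1)] =ᵐ[μ] 0)
    {B : ℝ} (hB : 0 < B) (hbdd : ∀ i, ∀ᵐ ω ∂μ, |X i ω| ≤ B)
    (t : ℝ) (l : ℕ) (hl : 1 ≤ l) :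
    ∀ k : ℕ, ∫ ω, Real.exp (t * ∑ i ∈ Finset.Ico l (l + k), X i ω) ∂μ
      ≤ Real.exp (k * (t ^ 2 * B ^ 2 / 2)) := by
  intro k
  induction k with
  | zero => simp
  | succ k ih =>
    set c0 : ℝ := t ^ 2 * B ^ 2 / 2 with hc0
    have hc0nn : 0 ≤ c0 := by positivity
    set S : Ω → ℝ := fun ω => ∑ i ∈ Finset.Ico l (l + k), X i ω with hS
    set f : Ω → ℝ := fun ω => Real.exp (t * S ω) with hf
    set g : Ω → ℝ := fun ω => Real.exp (t * X (l + k) ω) with hg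
    have hm : ℱ (l + k - 1) ≤ m0 := ℱ.le _
    have hS_meas : StronglyMeasurable[ℱ (l + k - 1)] S := by
      apply Finset.stronglyMeasurable_fun_sum
      intro i hi
      rw [Finset.mem_Ico] at hi
      exact (hadapted i).mono (ℱ.mono (by omega))
    have hf_meas : StronglyMeasurable[ℱ (l + k - 1)] f :=
      Real.continuous_exp.comp_stronglyMeasurable (hS_meas.const_mul t)
    have hbddS : ∀ᵐ ω ∂μ, |S ω| ≤ k * B := by
      have hall : ∀ᵐ ω ∂μ, ∀ i, |X i ω| ≤ B := ae_all_iff.2 hbdd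
      filter_upwards [hall] with ω h
      calc |S ω| ≤ ∑ i ∈ Finset.Ico l (l + k), |X i ω| :=
            Finset.abs_sum_le_sum_abs _ _
        _ ≤ ∑ i ∈ Finset.Ico l (l + k), B := Finset.sum_le_sum fun i _ => h i
        _ = k * B := by simp [Nat.add_sub_cancel_left, mul_comm]
    have hf_bound : ∀ᵐ ω ∂μ, ‖f ω‖ ≤ Real.exp (|t| * (k * B)) := by
      filter_upwards [hbddS] with ω h
      rw [Real.norm_eq_abs, abs_of_pos (Real.exp_pos _)]
      apply Real.exp_le_exp.2
      calc t * S ω ≤ |t * S ω| := le_abs_self _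
        _ = |t| * |S ω| := abs_mul _ _
        _ ≤ |t| * (k * B) := mul_le_mul_of_nonneg_left h (abs_nonneg t)
    have hg_int : Integrable g μ :=
      integrable_exp_of_bdd (hint _).aemeasurable (hbdd _) t
    have hf_int : Integrable f μ :=
      integrable_exp_of_bdd ((hS_meas.mono hm).measurable.aemeasurable)
        (by filter_upwards [hbddS] with ω h using h) t
    have hfg_int : Integrable (f * g) μ :=
      hg_int.bdd_mul (hf_meas.mono hm).aestronglyMeasurable hf_bound
    have hce : μ[g | ℱ (l + k - 1)] ≤ᵐ[μ] fun _ => Real.exp c0 := by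
      have h1 : 1 ≤ l + k := le_add_right hl
      have := condexp_exp_le (μ := μ) (ℱ.le ((l + k) - 1)) (hint (l + k))
        (hmds (l + k) h1) hB (hbdd (l + k)) t
      simpa using this
    have hfnn : ∀ ω, 0 ≤ f ω := fun ω => (Real.exp_pos _).le
    have key : ∫ ω, f ω * g ω ∂μ = ∫ ω, f ω * (μ[g | ℱ (l + k - 1)]) ω ∂μ := by
      have h1 : ∫ ω, (f * g) ω ∂μ = ∫ ω, (μ[f * g | ℱ (l + k - 1)]) ω ∂μ :=
        (integral_condExp hm).symm
      have h2 : μ[f * g | ℱ (l + k - 1)] =ᵐ[μ] f * μ[g | ℱ (l + k - 1)] :=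
        condExp_stronglyMeasurable_mul_of_bound hm hf_meas hg_int _ hf_bound
      calc ∫ ω, f ω * g ω ∂μ = ∫ ω, (f * g) ω ∂μ := rfl
        _ = ∫ ω, (μ[f * g | ℱ (l + k - 1)]) ω ∂μ := h1
        _ = ∫ ω, (f * μ[g | ℱ (l + k - 1)]) ω ∂μ := integral_congr_ae h2
        _ = ∫ ω, f ω * (μ[g | ℱ (l + k - 1)]) ω ∂μ := rfl
    have hbound : ∫ ω, f ω * (μ[g | ℱ (l + k - 1)]) ω ∂μ
        ≤ ∫ ω, f ω * Real.exp c0 ∂μ := by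
      refine integral_mono_ae ?_ (hf_int.mul_const _) ?_
      · exact integrable_condExp.bdd_mul (hf_meas.mono hm).aestronglyMeasurable hf_bound
      · filter_upwards [hce] with ω h
        exact mul_le_mul_of_nonneg_left h (hfnn ω)
    have hsplit : ∀ ω, Real.exp (t * ∑ i ∈ Finset.Ico l (l + (k+1)), X i ω)
        = f ω * g ω := by
      intro ω
      rw [← Nat.add_assoc, Finset.sum_Ico_succ_top (by omega), mul_add, Real.exp_add]
    calc ∫ ω, Real.exp (t * ∑ i ∈ Finset.Ico l (l + (k+1)), X i ω) ∂μ
        = ∫ ω, f ω * g ω ∂μ := by simp_rw [hsplit]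
      _ = ∫ ω, f ω * (μ[g | ℱ (l + k - 1)]) ω ∂μ := key
      _ ≤ ∫ ω, f ω * Real.exp c0 ∂μ := hbound
      _ = (∫ ω, f ω ∂μ) * Real.exp c0 := integral_mul_const _ _
      _ ≤ Real.exp (k * c0) * Real.exp c0 := by
          exact mul_le_mul_of_nonneg_right ih (Real.exp_pos _).le
      _ = Real.exp ((k + 1 : ℕ) * c0) := by
          rw [← Real.exp_add]; push_cast; ring_nf

lemma tail_le (ℱ : Filtration ℕ m0) (X : ℕ → Ω → ℝ)
    (hadapted : ∀ i, StronglyMeasurable[ℱ i] (X i))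
    (hint : ∀ i, Integrable (X i) μ)
    (hmds : ∀ i, 1 ≤ i → μ[X i | ℱ (i - 1)] =ᵐ[μ] 0)
    {B : ℝ} (hB : 0 < B) (hbdd : ∀ i, ∀ᵐ ω ∂μ, |X i ω| ≤ B)
    (l n : ℕ) (hl : 1 ≤ l) (hn : 1 ≤ n) {ε : ℝ} (hε : 0 ≤ ε) :
    μ {ω | ε ≤ ∑ i ∈ Finset.Icc l (l + n - 1), X i ω}
      ≤ ENNReal.ofReal (Real.exp (-(ε ^ 2) / (2 * n * B ^ 2))) := by
  have hIcc : Finset.Icc l (l + n - 1) = Finset.Ico l (l + n) := by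
    rw [← Finset.Ico_add_one_right_eq_Icc]
    congr 1
    omega
  set S : Ω → ℝ := fun ω => ∑ i ∈ Finset.Ico l (l + n), X i ω with hSdef
  have hn' : (0:ℝ) < n := by exact_mod_cast hn
  set t : ℝ := ε / (n * B ^ 2) with ht
  have ht0 : 0 ≤ t := div_nonneg hε (by positivity)
  have hS_meas : AEMeasurable S μ := by
    apply Finset.aemeasurable_fun_sum
    intro i _
    exact ((hadapted i).mono (ℱ.le i)).measurable.aemeasurable
  have hbddS : ∀ᵐ ω ∂μ, |S ω| ≤ n * B := by
    have hall : ∀ᵐ ω ∂μ, ∀ i, |X i ω| ≤ B := ae_all_iff.2 hbdd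
    filter_upwards [hall] with ω h
    calc |S ω| ≤ ∑ i ∈ Finset.Ico l (l + n), |X i ω| := Finset.abs_sum_le_sum_abs _ _
      _ ≤ ∑ i ∈ Finset.Ico l (l + n), B := Finset.sum_le_sum fun i _ => h i
      _ = n * B := by simp [Nat.add_sub_cancel_left, mul_comm]
  have h_int : Integrable (fun ω => Real.exp (t * S ω)) μ :=
    integrable_exp_of_bdd hS_meas hbddS t
  have hcher := ProbabilityTheory.measure_ge_le_exp_mul_mgf (X := S) (μ := μ) ε ht0 h_int
  have hmgf : ProbabilityTheory.mgf S μ t ≤ Real.exp (n * (t ^ 2 * B ^ 2 / 2)) :=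
    mgf_sum_le ℱ X hadapted hint hmds hB hbdd t l hl n
  have harith : -t * ε + n * (t ^ 2 * B ^ 2 / 2) = -(ε ^ 2) / (2 * n * B ^ 2) := by
    rw [ht]
    field_simp
    ring
  have htr : (μ {ω | ε ≤ S ω}).toReal ≤ Real.exp (-(ε ^ 2) / (2 * n * B ^ 2)) := by
    calc (μ {ω | ε ≤ S ω}).toReal ≤ Real.exp (-t * ε) * ProbabilityTheory.mgf S μ t := hcher
      _ ≤ Real.exp (-t * ε) * Real.exp (n * (t ^ 2 * B ^ 2 / 2)) :=
          mul_le_mul_of_nonneg_left hmgf (Real.exp_pos _).le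
      _ = Real.exp (-(ε ^ 2) / (2 * n * B ^ 2)) := by rw [← Real.exp_add, harith]
  rw [hIcc]
  calc μ {ω | ε ≤ S ω} = ENNReal.ofReal (μ {ω | ε ≤ S ω}).toReal :=
        (ENNReal.ofReal_toReal (measure_ne_top μ _)).symm
    _ ≤ ENNReal.ofReal (Real.exp (-(ε ^ 2) / (2 * n * B ^ 2))) :=
        ENNReal.ofReal_le_ofReal htr

lemma bad_le (ℱ : Filtration ℕ m0) (X : ℕ → Ω → ℝ)
    (hadapted : ∀ i, StronglyMeasurable[ℱ i] (X i))
    (hint : ∀ i, Integrable (X i) μ)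
    (hmds : ∀ i, 1 ≤ i → μ[X i | ℱ (i - 1)] =ᵐ[μ] 0)
    {B : ℝ} (hB : 0 ≤ B) (hbdd : ∀ i, ∀ᵐ ω ∂μ, |X i ω| ≤ B)
    {δ : ℝ} (hδ0 : 0 < δ) (hδ1 : δ < 1)
    (l n : ℕ) (hl : 1 ≤ l) (hn : 1 ≤ n) :
    μ {ω | ¬ |∑ i ∈ Finset.Icc l (l + n - 1), X i ω|
        ≤ B * Real.sqrt (2 * n * Real.log (4 * ((l + n - 1) : ℕ) ^ 3 / δ))}
      ≤ ENNReal.ofReal (δ / (2 * ((l + n - 1) : ℕ) ^ 3)) := by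
  set M : ℕ := l + n - 1 with hM
  have hM1 : 1 ≤ M := by omega
  have hMr : (1:ℝ) ≤ (M:ℝ) := by exact_mod_cast hM1
  set L : ℝ := Real.log (4 * (M:ℝ) ^ 3 / δ) with hLdef
  have hargpos : (0:ℝ) < 4 * (M:ℝ) ^ 3 / δ := by positivity
  have hL0 : 0 ≤ L := by
    apply Real.log_nonneg
    rw [le_div_iff₀ hδ0]
    have hM3 : (1:ℝ) ≤ (M:ℝ) ^ 3 := one_le_pow₀ hMr
    nlinarith
  set ε : ℝ := B * Real.sqrt (2 * n * L) with hε
  have hεnn : 0 ≤ ε := mul_nonneg hB (Real.sqrt_nonneg _)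
  rcases hB.eq_or_lt with hB0 | hBpos
  · -- B = 0 : all X i are a.e. zero
    have hz : ∀ i, ∀ᵐ ω ∂μ, X i ω = 0 := by
      intro i
      filter_upwards [hbdd i] with ω h
      rw [← hB0] at h
      exact abs_eq_zero.mp (le_antisymm h (abs_nonneg _))
    have hall : ∀ᵐ ω ∂μ, ∀ i, X i ω = 0 := ae_all_iff.2 hz
    have hgood : ∀ᵐ ω ∂μ, |∑ i ∈ Finset.Icc l M, X i ω| ≤ ε := by
      filter_upwards [hall] with ω h
      simp [Finset.sum_congr rfl fun i _ => h i, hεnn]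
    exact le_of_eq_of_le (ae_iff.mp hgood) (zero_le ..)
  · -- B > 0
    have hn' : (0:ℝ) < n := by exact_mod_cast hn
    have hsub : {ω | ¬ |∑ i ∈ Finset.Icc l (l + n - 1), X i ω| ≤ ε}
        ⊆ {ω | ε ≤ ∑ i ∈ Finset.Icc l (l + n - 1), X i ω}
          ∪ {ω | ε ≤ ∑ i ∈ Finset.Icc l (l + n - 1), (fun j => -(X j)) i ω} := by
      intro ω hω
      simp only [Set.mem_setOf_eq, not_le] at hω
      rcases lt_abs.mp hω with h | h
      · exact Or.inl h.le
      · right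
        simp only [Set.mem_setOf_eq, Pi.neg_apply, Finset.sum_neg_distrib]
        linarith
    have hBne : (B:ℝ) ≠ 0 := hBpos.ne'
    have hMne : ((M:ℝ)) ≠ 0 := by positivity
    have hval : -(ε ^ 2) / (2 * n * B ^ 2) = -L := by
      rw [hε, mul_pow, Real.sq_sqrt (by positivity)]
      field_simp
    have hexp : Real.exp (-(ε ^ 2) / (2 * n * B ^ 2)) = δ / (4 * (M:ℝ) ^ 3) := by
      rw [hval, Real.exp_neg, hLdef, Real.exp_log hargpos, inv_div]
    have h1 := tail_le ℱ X hadapted hint hmds hBpos hbdd l n hl hn hεnn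
    have h2 : μ {ω | ε ≤ ∑ i ∈ Finset.Icc l (l + n - 1), (fun j => -(X j)) i ω}
        ≤ ENNReal.ofReal (Real.exp (-(ε ^ 2) / (2 * n * B ^ 2))) := by
      refine tail_le ℱ (fun j => -(X j)) (fun i => (hadapted i).neg)
        (fun i => (hint i).neg) (fun i hi => ?_) hBpos (fun i => ?_) l n hl hn hεnn
      · calc μ[-(X i)|ℱ (i - 1)] =ᵐ[μ] -μ[X i|ℱ (i - 1)] := condExp_neg (X i) _
          _ =ᵐ[μ] 0 := by
            filter_upwards [hmds i hi] with ω h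
            simp only [Pi.neg_apply, Pi.zero_apply] at h ⊢
            simp [h]
      · filter_upwards [hbdd i] with ω h
        simpa using h
    have hsum : δ / (4 * (M:ℝ) ^ 3) + δ / (4 * (M:ℝ) ^ 3) = δ / (2 * (M:ℝ) ^ 3) := by
      field_simp
      ring
    calc μ {ω | ¬ |∑ i ∈ Finset.Icc l (l + n - 1), X i ω| ≤ ε}
        ≤ μ ({ω | ε ≤ ∑ i ∈ Finset.Icc l (l + n - 1), X i ω}
          ∪ {ω | ε ≤ ∑ i ∈ Finset.Icc l (l + n - 1), (fun j => -(X j)) i ω}) :=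
          measure_mono hsub
      _ ≤ μ {ω | ε ≤ ∑ i ∈ Finset.Icc l (l + n - 1), X i ω}
          + μ {ω | ε ≤ ∑ i ∈ Finset.Icc l (l + n - 1), (fun j => -(X j)) i ω} :=
          measure_union_le _ _
      _ ≤ ENNReal.ofReal (Real.exp (-(ε ^ 2) / (2 * n * B ^ 2)))
          + ENNReal.ofReal (Real.exp (-(ε ^ 2) / (2 * n * B ^ 2))) := add_le_add h1 h2
      _ = ENNReal.ofReal (δ / (2 * (M:ℝ) ^ 3)) := by
          rw [hexp, ← ENNReal.ofReal_add (by positivity) (by positivity), hsum]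

lemma series_le {δ : ℝ} (hδ0 : 0 < δ) :
    ∑' p : ℕ × ℕ, ENNReal.ofReal (δ / (2 * ((p.1 + p.2 + 1 : ℕ) : ℝ) ^ 3))
      ≤ ENNReal.ofReal δ := by
  set g : ℕ → ENNReal := fun m => ENNReal.ofReal (δ / (2 * ((m + 1 : ℕ) : ℝ) ^ 3)) with hg
  have h1 : ∑' p : ℕ × ℕ, ENNReal.ofReal (δ / (2 * ((p.1 + p.2 + 1 : ℕ) : ℝ) ^ 3))
      = ∑' x : Σ n : ℕ, Finset.HasAntidiagonal.antidiagonal n, g x.1 := by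
    rw [← Finset.HasAntidiagonal.sigmaAntidiagonalEquivProd.tsum_eq
      (fun p : ℕ × ℕ => ENNReal.ofReal (δ / (2 * ((p.1 + p.2 + 1 : ℕ) : ℝ) ^ 3)))]
    apply tsum_congr
    rintro ⟨n, ⟨⟨a, b⟩, hab⟩⟩
    rw [Finset.HasAntidiagonal.mem_antidiagonal] at hab
    subst hab
    rfl
  have h2 : ∑' x : Σ n : ℕ, Finset.HasAntidiagonal.antidiagonal n, g x.1
      = ∑' n : ℕ, ((n : ENNReal) + 1) * g n := by
    rw [ENNReal.tsum_sigma']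
    apply tsum_congr
    intro n
    simp only
    rw [tsum_fintype]
    rw [Finset.sum_const, Finset.card_univ, Fintype.card_coe,
      Finset.Nat.card_antidiagonal, nsmul_eq_mul]
    push_cast
    ring
  set a : ℕ → ℝ := fun n => δ / 2 * (1 / ((n : ℝ) + 1) ^ 2) with ha
  have hA : ∀ n : ℕ, ((n : ENNReal) + 1) * g n = ENNReal.ofReal (a n) := by
    intro n
    have hcast : ((n : ENNReal) + 1) = ENNReal.ofReal (((n + 1 : ℕ) : ℝ)) := by
      rw [ENNReal.ofReal_natCast]
      push_cast
      ring
    rw [hg, hcast, ← ENNReal.ofReal_mul (by positivity)]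
    congr 1
    have hpos : (0:ℝ) < ((n + 1 : ℕ) : ℝ) := by positivity
    rw [ha]
    push_cast
    field_simp
  have hb : Summable (fun n : ℕ => 1 / ((n : ℝ) + 1) ^ 2) := by
    have h2 : Summable (fun n : ℕ => 1 / (n : ℝ) ^ 2) :=
      summable_one_div_nat_pow.mpr one_lt_two
    have := (summable_nat_add_iff 1).2 h2
    apply this.congr
    intro n
    push_cast
    ring
  have hsum : Summable a := hb.mul_left _
  have hzeta : ∑' n : ℕ, 1 / ((n : ℝ) + 1) ^ 2 = Real.pi ^ 2 / 6 := by
    have hz := hasSum_zeta_two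
    have h0 := Summable.tsum_eq_zero_add hz.summable
    rw [hz.tsum_eq] at h0
    have h00 : 1 / ((0 : ℕ) : ℝ) ^ 2 = 0 := by norm_num
    rw [h00, zero_add] at h0
    rw [h0]
    apply tsum_congr
    intro n
    push_cast
    ring
  have htsum : ∑' n : ℕ, a n ≤ δ := by
    rw [ha, tsum_mul_left, hzeta]
    have hpi : Real.pi ^ 2 ≤ 12 := by nlinarith [Real.pi_lt_d2, Real.pi_gt_three]
    nlinarith [hpi, hδ0]
  calc ∑' p : ℕ × ℕ, ENNReal.ofReal (δ / (2 * ((p.1 + p.2 + 1 : ℕ) : ℝ) ^ 3))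
      = ∑' n : ℕ, ((n : ENNReal) + 1) * g n := by rw [h1, h2]
    _ = ∑' n : ℕ, ENNReal.ofReal (a n) := tsum_congr hA
    _ = ENNReal.ofReal (∑' n : ℕ, a n) :=
        (ENNReal.ofReal_tsum_of_nonneg (fun n => by positivity) hsum).symm
    _ ≤ ENNReal.ofReal δ := ENNReal.ofReal_le_ofReal htsum

end AzumaAux


/-- Any-interval Azuma inequality: with probability at least `1 - δ`, the partial
sums of a bounded martingale difference sequence over every interval `[l, l+n-1]`
are simultaneously bounded. -/
theorem stmt_12 {Ω : Type*} {m : MeasurableSpace Ω} (μ : Measure Ω)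
    [IsProbabilityMeasure μ] (ℱ : Filtration ℕ m)
    (X : ℕ → Ω → ℝ) (B : ℝ) (hB : 0 ≤ B)
    (hadapted : ∀ i, StronglyMeasurable[ℱ i] (X i))
    (hint : ∀ i, Integrable (X i) μ)
    (hmds : ∀ i, 1 ≤ i → μ[X i | ℱ (i - 1)] =ᵐ[μ] 0)
    (hbdd : ∀ i, ∀ᵐ ω ∂μ, |X i ω| ≤ B)
    (δ : ℝ) (hδ0 : 0 < δ) (hδ1 : δ < 1) :
    1 - ENNReal.ofReal δ ≤
      μ {ω | ∀ l, 1 ≤ l → ∀ n, 1 ≤ n →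
        |∑ i ∈ Finset.Icc l (l + n - 1), X i ω|
          ≤ B * Real.sqrt (2 * n * Real.log (4 * ((l + n - 1) : ℕ) ^ 3 / δ))} := by
  classical
  set G : Set Ω := {ω | ∀ l, 1 ≤ l → ∀ n, 1 ≤ n →
      |∑ i ∈ Finset.Icc l (l + n - 1), X i ω|
        ≤ B * Real.sqrt (2 * n * Real.log (4 * ((l + n - 1) : ℕ) ^ 3 / δ))} with hG
  have hmeasS : ∀ l n : ℕ, Measurable fun ω => ∑ i ∈ Finset.Icc l (l + n - 1), X i ω :=
    fun l n => Finset.measurable_sum _ fun i _ => ((hadapted i).mono (ℱ.le i)).measurable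
  have hGmeas : MeasurableSet G := by
    rw [hG]
    simp only [Set.setOf_forall]
    refine MeasurableSet.iInter fun l => ?_
    refine MeasurableSet.iInter fun _ => ?_
    refine MeasurableSet.iInter fun n => ?_
    refine MeasurableSet.iInter fun _ => ?_
    exact measurableSet_le (hmeasS l n).abs measurable_const
  set Bad : ℕ × ℕ → Set Ω := fun p =>
    {ω | ¬ |∑ i ∈ Finset.Icc (p.1 + 1) ((p.1 + 1) + (p.2 + 1) - 1), X i ω|
      ≤ B * Real.sqrt (2 * (p.2 + 1 : ℕ) *
        Real.log (4 * (((p.1 + 1) + (p.2 + 1) - 1 : ℕ) : ℕ) ^ 3 / δ))} with hBad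
  have hsub : Gᶜ ⊆ ⋃ p : ℕ × ℕ, Bad p := by
    intro ω hω
    simp only [hG, Set.mem_compl_iff, Set.mem_setOf_eq, not_forall] at hω
    obtain ⟨l, hl, n, hn, hbad⟩ := hω
    obtain ⟨a, rfl⟩ : ∃ a, l = a + 1 := ⟨l - 1, by omega⟩
    obtain ⟨b, rfl⟩ : ∃ b, n = b + 1 := ⟨n - 1, by omega⟩
    exact Set.mem_iUnion.2 ⟨(a, b), hbad⟩
  have hcompl : μ Gᶜ ≤ ENNReal.ofReal δ := by
    calc μ Gᶜ ≤ μ (⋃ p : ℕ × ℕ, Bad p) := measure_mono hsub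
      _ ≤ ∑' p : ℕ × ℕ, μ (Bad p) := measure_iUnion_le _
      _ ≤ ∑' p : ℕ × ℕ, ENNReal.ofReal (δ / (2 * ((p.1 + p.2 + 1 : ℕ) : ℝ) ^ 3)) := by
          refine ENNReal.tsum_le_tsum fun p => ?_
          have h := AzumaAux.bad_le (μ := μ) ℱ X hadapted hint hmds hB hbdd hδ0 hδ1
            (p.1 + 1) (p.2 + 1) (by omega) (by omega)
          have heq : (p.1 + 1) + (p.2 + 1) - 1 = p.1 + p.2 + 1 := by omega
          rw [hBad]
          simp only [heq] at h ⊢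
          exact h
      _ ≤ ENNReal.ofReal δ := AzumaAux.series_le hδ0
  have hone : μ G + μ Gᶜ = 1 := prob_add_prob_compl hGmeas
  have : (1 : ENNReal) ≤ μ G + ENNReal.ofReal δ := by
    rw [← hone]
    exact add_le_add_right hcompl _
  exact tsub_le_iff_right.2 this
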